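/- arXiv:1701.02286 — 2 statements merged into one kernel-verified Lean document; each statement's English description precedes it below -/
import Mathlib

section
/- Let q be a prime with q ≡ 1 or 23 (mod 24) (i.e. q ≡ ±1 (mod 24)). For every complex number s with Re(s) > 1, L(s, λ_q) = ζ(qs) ζ(s) · ∏_p ( 1 + ∑_{m=4}^{q-1} { ((m+1)/q) − (m/q) } · p^{-ms} ), where the product runs over all prime numbers p. -/
open Filter

/-- `λ_q(n) = (τ(n)/q)` : the Legendre symbol mod `q` of the number of divisors of `n`. -/
noncomputable def lamq (q : ℕ) [Fact q.Prime] (n : ℕ) : ℂ :=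
  (legendreSym q (n.divisors.card : ℤ) : ℂ)

instance fact_prime_three' : Fact (Nat.Prime 3) := ⟨by norm_num⟩

section values
variable (q : ℕ) [Fact q.Prime]

lemma legendre_norm_le_one (a : ℤ) : ‖(legendreSym q a : ℂ)‖ ≤ 1 := by
  rcases eq_or_ne ((a : ZMod q)) 0 with h | h
  · simp [(legendreSym.eq_zero_iff q a).mpr h]
  · rcases legendreSym.eq_one_or_neg_one q h with h' | h' <;> simp [h']

lemma leg_two (hq : q % 24 = 1 ∨ q % 24 = 23) : legendreSym q 2 = 1 := by
  have hq23 : 23 ≤ q := by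
    have := (Fact.out : q.Prime).one_lt
    omega
  have h2 : ((2 : ℤ) : ZMod q) ≠ 0 := by
    simp only [Ne, ZMod.intCast_zmod_eq_zero_iff_dvd]
    intro h
    have : (q : ℤ) ≤ 2 := Int.le_of_dvd (by norm_num) h
    omega
  rw [legendreSym.eq_one_iff q h2]
  have := (ZMod.exists_sq_eq_two_iff (p := q) (by omega)).mpr (by omega)
  exact_mod_cast this

lemma leg_three (hq : q % 24 = 1 ∨ q % 24 = 23) : legendreSym q 3 = 1 := by
  have hq23 : 23 ≤ q := by
    have := (Fact.out : q.Prime).one_lt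
    omega
  rw [show (3 : ℤ) = ((3 : ℕ) : ℤ) by norm_num]
  rcases hq with h | h
  · rw [← legendreSym.quadratic_reciprocity_one_mod_four (p := q) (q := 3) (by omega) (by norm_num)]
    rw [legendreSym.mod 3 (q : ℤ), show ((q : ℤ) % ((3:ℕ):ℤ)) = 1 by push_cast; omega, legendreSym.at_one]
  · rw [show legendreSym q ((3:ℕ):ℤ) = - legendreSym 3 q from by
      rw [legendreSym.quadratic_reciprocity_three_mod_four (p := q) (q := 3) (by omega) (by norm_num)]; ring]
    rw [legendreSym.mod 3 (q : ℤ), show ((q : ℤ) % ((3:ℕ):ℤ)) = 2 by push_cast; omega]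
    have : legendreSym 3 2 = -1 := by decide
    rw [this]; ring

end values

section key
variable (q : ℕ) [Fact q.Prime]

lemma leg_zero : legendreSym q 0 = 0 := by
  rw [legendreSym.eq_zero_iff]; simp

lemma leg_self : legendreSym q (q : ℤ) = 0 := by
  rw [legendreSym.eq_zero_iff]; exact_mod_cast ZMod.natCast_self q

lemma leg_four (hq : q % 24 = 1 ∨ q % 24 = 23) : legendreSym q 4 = 1 := by
  rw [show (4 : ℤ) = 2 * 2 by norm_num, legendreSym.mul, leg_two q hq]; norm_num

lemma key_poly (hq : q % 24 = 1 ∨ q % 24 = 23) (x : ℂ) (hx : ‖x‖ < 1) :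
    (∑' e : ℕ, (legendreSym q ((e : ℤ) + 1) : ℂ) * x ^ e) * ((1 - x ^ q) * (1 - x)) =
      1 + ∑ m ∈ Finset.Icc 4 (q - 1),
        ((legendreSym q ((m : ℤ) + 1) - legendreSym q (m : ℤ) : ℤ) : ℂ) * x ^ m := by
  have hq23 : 23 ≤ q := by have := (Fact.out : q.Prime).one_lt; omega
  have hsum : Summable (fun e : ℕ => (legendreSym q ((e : ℤ) + 1) : ℂ) * x ^ e) := by
    refine Summable.of_norm_bounded (summable_geometric_of_lt_one (norm_nonneg x) hx) fun e => ?_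
    rw [norm_mul, norm_pow]
    calc ‖(legendreSym q ((e : ℤ) + 1) : ℂ)‖ * ‖x‖ ^ e ≤ 1 * ‖x‖ ^ e := by
          gcongr; exact legendre_norm_le_one q _
      _ = ‖x‖ ^ e := one_mul _
  have hsplit := Summable.sum_add_tsum_nat_add (f := fun e : ℕ => (legendreSym q ((e : ℤ) + 1) : ℂ) * x ^ e)
    q hsum
  have hshift : (∑' e : ℕ, (legendreSym q (((e + q : ℕ) : ℤ) + 1) : ℂ) * x ^ (e + q))
      = (∑' e : ℕ, (legendreSym q ((e : ℤ) + 1) : ℂ) * x ^ e) * x ^ q := by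
    rw [← tsum_mul_right]
    congr 1; funext e
    have hl : legendreSym q (((e + q : ℕ) : ℤ) + 1) = legendreSym q ((e : ℤ) + 1) := by
      rw [legendreSym.mod q (((e + q : ℕ) : ℤ) + 1), legendreSym.mod q ((e : ℤ) + 1)]
      congr 1
      push_cast
      rw [show (e : ℤ) + q + 1 = ((e : ℤ) + 1) + 1 * q by ring, Int.add_mul_emod_self_right]
    rw [hl, pow_add]; ring
  set S := ∑' e : ℕ, (legendreSym q ((e : ℤ) + 1) : ℂ) * x ^ e with hS
  set P := ∑ e ∈ Finset.range q, (legendreSym q ((e : ℤ) + 1) : ℂ) * x ^ e with hP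
  rw [hshift] at hsplit
  -- hsplit : P + S * x ^ q = S
  have tele : ∑ e ∈ Finset.range q, ((legendreSym q ((e : ℕ) : ℤ) : ℂ) * x ^ e
        - (legendreSym q (((e + 1 : ℕ)) : ℤ) : ℂ) * x ^ (e + 1))
      = (legendreSym q (((0 : ℕ)) : ℤ) : ℂ) * x ^ 0 - (legendreSym q ((q : ℕ) : ℤ) : ℂ) * x ^ q :=
    Finset.sum_range_sub' (fun e => (legendreSym q ((e : ℕ) : ℤ) : ℂ) * x ^ e) q
  have expand : P * (1 - x) = ∑ e ∈ Finset.range q,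
      ((legendreSym q ((e : ℤ) + 1) : ℂ) - (legendreSym q (e : ℤ) : ℂ)) * x ^ e := by
    rw [hP, Finset.sum_mul, ← sub_eq_zero, ← Finset.sum_sub_distrib]
    have hterm : ∀ e ∈ Finset.range q,
        ((legendreSym q ((e : ℤ) + 1) : ℂ) * x ^ e * (1 - x)
          - ((legendreSym q ((e : ℤ) + 1) : ℂ) - (legendreSym q (e : ℤ) : ℂ)) * x ^ e)
        = ((legendreSym q ((e : ℕ) : ℤ) : ℂ) * x ^ e
            - (legendreSym q (((e + 1 : ℕ)) : ℤ) : ℂ) * x ^ (e + 1)) := by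
      intro e _
      push_cast
      ring
    rw [Finset.sum_congr rfl hterm, tele]
    norm_num [leg_zero, leg_self]
  have hins : Finset.range q = insert 0 (Finset.Icc 1 (q - 1)) := by
    ext a; simp only [Finset.mem_range, Finset.mem_insert, Finset.mem_Icc]; omega
  have hsub : ∑ m ∈ Finset.Icc 1 (q - 1),
        ((legendreSym q ((m : ℤ) + 1) : ℂ) - (legendreSym q (m : ℤ) : ℂ)) * x ^ m
      = ∑ m ∈ Finset.Icc 4 (q - 1),
        ((legendreSym q ((m : ℤ) + 1) : ℂ) - (legendreSym q (m : ℤ) : ℂ)) * x ^ m := by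
    refine (Finset.sum_subset (Finset.Icc_subset_Icc_left (by norm_num)) ?_).symm
    intro e he hne
    simp only [Finset.mem_Icc] at he hne
    have h123 : e = 1 ∨ e = 2 ∨ e = 3 := by omega
    rcases h123 with rfl | rfl | rfl <;>
      norm_num [leg_two q hq, leg_three q hq, leg_four q hq, legendreSym.at_one,
        show ((1 : ℕ) : ℤ) + 1 = 2 by norm_num, show ((2 : ℕ) : ℤ) + 1 = 3 by norm_num,
        show ((3 : ℕ) : ℤ) + 1 = 4 by norm_num]
  have hQ : P * (1 - x) = 1 + ∑ m ∈ Finset.Icc 4 (q - 1),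
      ((legendreSym q ((m : ℤ) + 1) - legendreSym q (m : ℤ) : ℤ) : ℂ) * x ^ m := by
    rw [expand, hins, Finset.sum_insert (by simp), hsub]
    push_cast
    norm_num [legendreSym.at_one, leg_zero]
  calc S * ((1 - x ^ q) * (1 - x)) = (S * (1 - x ^ q)) * (1 - x) := by ring
    _ = P * (1 - x) := by rw [show S * (1 - x ^ q) = P from by linear_combination -hsplit]
    _ = _ := hQ

end key


section euler

lemma term_mult {F : ℕ → ℂ} (hF : ∀ m n : ℕ, Nat.Coprime m n → F (m * n) = F m * F n) (s : ℂ)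
    {m n : ℕ} (h : Nat.Coprime m n) :
    LSeries.term F s (m * n) = LSeries.term F s m * LSeries.term F s n := by
  rcases eq_or_ne m 0 with rfl | hm
  · simp
  rcases eq_or_ne n 0 with rfl | hn
  · simp
  rw [LSeries.term_of_ne_zero (Nat.mul_ne_zero hm hn), LSeries.term_of_ne_zero hm,
    LSeries.term_of_ne_zero hn, hF m n h,
    show ((m * n : ℕ) : ℂ) = ((m : ℝ) : ℂ) * ((n : ℝ) : ℂ) by push_cast; ring,
    Complex.mul_cpow_ofReal_nonneg (Nat.cast_nonneg m) (Nat.cast_nonneg n)]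
  push_cast
  rw [div_mul_div_comm]

lemma lamq_mul (q : ℕ) [Fact q.Prime] (m n : ℕ) (h : Nat.Coprime m n) :
    lamq q (m * n) = lamq q m * lamq q n := by
  unfold lamq
  rw [h.card_divisors_mul]
  push_cast
  rw [legendreSym.mul]
  push_cast
  ring

lemma local_factor (q : ℕ) [Fact q.Prime] (s : ℂ) {p : ℕ} (hp : p.Prime) (e : ℕ) :
    LSeries.term (lamq q) s (p ^ e) = (legendreSym q ((e : ℤ) + 1) : ℂ) * ((p : ℂ) ^ (-s)) ^ e := by
  have hp0 : p ≠ 0 := hp.pos.ne'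
  rw [LSeries.term_of_ne_zero (pow_ne_zero e hp0)]
  have hcard : (p ^ e).divisors.card = e + 1 := by
    rw [Nat.divisors_prime_pow hp, Finset.card_map, Finset.card_range]
  unfold lamq
  rw [hcard]
  have hden : ((p ^ e : ℕ) : ℂ) ^ s = ((p : ℂ) ^ ((e : ℂ) * s)) := by
    rw [Nat.cast_pow, ← Complex.natCast_cpow_natCast_mul]
  rw [hden, div_eq_mul_inv, ← Complex.cpow_neg,
    show -((e : ℂ) * s) = (e : ℂ) * (-s) by ring, Complex.cpow_nat_mul]
  norm_num

lemma moebius_local (s : ℂ) {p : ℕ} (hp : p.Prime) :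
    ∑' e : ℕ, LSeries.term (fun n => ((ArithmeticFunction.moebius n : ℤ) : ℂ)) s (p ^ e)
      = 1 - (p : ℂ) ^ (-s) := by
  rw [tsum_eq_sum (s := Finset.range 2) ?_]
  · rw [Finset.sum_range_succ, Finset.sum_range_one, pow_zero, pow_one,
      LSeries.term_of_ne_zero one_ne_zero, LSeries.term_of_ne_zero hp.pos.ne']
    rw [ArithmeticFunction.moebius_apply_one, ArithmeticFunction.moebius_apply_prime hp]
    push_cast
    rw [Complex.one_cpow, Complex.cpow_neg]
    ring
  · intro e he
    have he2 : 2 ≤ e := by simp at he; omega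
    rw [LSeries.term_of_ne_zero (pow_ne_zero _ hp.pos.ne'),
      ArithmeticFunction.moebius_apply_prime_pow hp (by omega), if_neg (by omega)]
    simp

lemma moebius_hasProd (t : ℂ) (ht : 1 < t.re) :
    HasProd (fun p : Nat.Primes => 1 - ((p : ℕ) : ℂ) ^ (-t))
      (∑' n, LSeries.term (fun n => ((ArithmeticFunction.moebius n : ℤ) : ℂ)) t n) := by
  have hf₁ : LSeries.term (fun n => ((ArithmeticFunction.moebius n : ℤ) : ℂ)) t 1 = 1 := by
    rw [LSeries.term_of_ne_zero one_ne_zero, ArithmeticFunction.moebius_apply_one]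
    norm_num
  have hmul : ∀ {m n : ℕ}, Nat.Coprime m n →
      LSeries.term (fun n => ((ArithmeticFunction.moebius n : ℤ) : ℂ)) t (m * n)
        = LSeries.term (fun n => ((ArithmeticFunction.moebius n : ℤ) : ℂ)) t m
          * LSeries.term (fun n => ((ArithmeticFunction.moebius n : ℤ) : ℂ)) t n := by
    intro m n h
    refine term_mult (fun m n h => ?_) t h
    rw [ArithmeticFunction.isMultiplicative_moebius.map_mul_of_coprime h]
    push_cast
    ring
  have hsum : Summable fun n =>
      ‖LSeries.term (fun n => ((ArithmeticFunction.moebius n : ℤ) : ℂ)) t n‖ :=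
    summable_norm_iff.mpr (ArithmeticFunction.LSeriesSummable_moebius_iff.mpr ht)
  have h := EulerProduct.eulerProduct_hasProd hf₁ hmul hsum (LSeries.term_zero _ _)
  have h2 : (fun p : Nat.Primes =>
        ∑' e : ℕ, LSeries.term (fun n => ((ArithmeticFunction.moebius n : ℤ) : ℂ)) t ((p : ℕ) ^ e))
      = fun p : Nat.Primes => 1 - ((p : ℕ) : ℂ) ^ (-t) :=
    funext fun p => moebius_local t p.prop
  rwa [h2] at h

end euler

theorem dirichlet_series_lamq_pm1_mod24 (q : ℕ) [Fact q.Prime]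
    (hq : q % 24 = 1 ∨ q % 24 = 23) (s : ℂ) (hs : 1 < s.re) :
    LSeries (lamq q) s =
      riemannZeta (q * s) * riemannZeta s *
        ∏' p : Nat.Primes,
          (1 + ∑ m ∈ Finset.Icc 4 (q - 1),
            ((legendreSym q ((m : ℤ) + 1) - legendreSym q (m : ℤ) : ℤ) : ℂ) *
              ((p : ℕ) : ℂ) ^ (-((m : ℂ) * s))) := by
  have hq23 : 23 ≤ q := by have := (Fact.out : q.Prime).one_lt; omega
  have hsq : 1 < ((q : ℂ) * s).re := by
    have h1 : ((q : ℂ) * s).re = (q : ℝ) * s.re := by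
      simp [Complex.mul_re]
    rw [h1]
    have hq1 : (1 : ℝ) ≤ (q : ℝ) := by exact_mod_cast (by omega : 1 ≤ q)
    nlinarith
  -- Euler product for lamq
  have hf₁ : LSeries.term (lamq q) s 1 = 1 := by
    rw [LSeries.term_of_ne_zero one_ne_zero]
    simp [lamq, Nat.divisors_one, legendreSym.at_one]
  have hmul : ∀ {m n : ℕ}, Nat.Coprime m n →
      LSeries.term (lamq q) s (m * n)
        = LSeries.term (lamq q) s m * LSeries.term (lamq q) s n :=
    fun h => term_mult (lamq_mul q) s h
  have hsum : Summable fun n => ‖LSeries.term (lamq q) s n‖ :=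
    summable_norm_iff.mpr <|
      LSeriesSummable_of_bounded_of_one_lt_re (m := 1)
        (fun n _ => by exact legendre_norm_le_one q _) hs
  have hprod := EulerProduct.eulerProduct_hasProd hf₁ hmul hsum (LSeries.term_zero _ _)
  have hloc : (fun p : Nat.Primes => ∑' e : ℕ, LSeries.term (lamq q) s ((p : ℕ) ^ e))
      = fun p : Nat.Primes =>
          ∑' e : ℕ, (legendreSym q ((e : ℤ) + 1) : ℂ) * (((p : ℕ) : ℂ) ^ (-s)) ^ e :=
    funext fun p => tsum_congr fun e => local_factor q s p.prop e
  rw [hloc] at hprod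
  -- power rewriting
  have hpowq : ∀ p : Nat.Primes, ((p : ℕ) : ℂ) ^ (-((q : ℂ) * s)) = (((p : ℕ) : ℂ) ^ (-s)) ^ q :=
    fun p => by rw [show -((q : ℂ) * s) = (q : ℂ) * (-s) by ring, Complex.cpow_nat_mul]
  have hpowm : ∀ (p : Nat.Primes) (m : ℕ),
      ((p : ℕ) : ℂ) ^ (-((m : ℂ) * s)) = (((p : ℕ) : ℂ) ^ (-s)) ^ m :=
    fun p m => by rw [show -((m : ℂ) * s) = (m : ℂ) * (-s) by ring, Complex.cpow_nat_mul]
  -- zeta Euler products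
  have hz1 := riemannZeta_eulerProduct_hasProd hs
  have hz2 := riemannZeta_eulerProduct_hasProd hsq
  simp only [hpowq] at hz2
  -- multipliability of the linear factors
  have hm1 : Multipliable (fun p : Nat.Primes => 1 - ((p : ℕ) : ℂ) ^ (-s)) :=
    (moebius_hasProd s hs).multipliable
  have hmq : Multipliable (fun p : Nat.Primes => 1 - (((p : ℕ) : ℂ) ^ (-s)) ^ q) := by
    have := (moebius_hasProd _ hsq).multipliable
    simpa only [hpowq] using this
  have hx : ∀ p : Nat.Primes, ‖((p : ℕ) : ℂ) ^ (-s)‖ < 1 := fun p =>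
    lt_of_le_of_lt (Complex.norm_prime_cpow_le_one_half p hs) (by norm_num)
  have hCeq : ∀ p : Nat.Primes,
      (1 + ∑ m ∈ Finset.Icc 4 (q - 1),
          ((legendreSym q ((m : ℤ) + 1) - legendreSym q (m : ℤ) : ℤ) : ℂ)
            * (((p : ℕ) : ℂ) ^ (-s)) ^ m)
      = (∑' e : ℕ, (legendreSym q ((e : ℤ) + 1) : ℂ) * (((p : ℕ) : ℂ) ^ (-s)) ^ e)
          * ((1 - (((p : ℕ) : ℂ) ^ (-s)) ^ q) * (1 - ((p : ℕ) : ℂ) ^ (-s))) :=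
    fun p => (key_poly q hq _ (hx p)).symm
  have hC : Multipliable (fun p : Nat.Primes =>
      1 + ∑ m ∈ Finset.Icc 4 (q - 1),
        ((legendreSym q ((m : ℤ) + 1) - legendreSym q (m : ℤ) : ℤ) : ℂ)
          * (((p : ℕ) : ℂ) ^ (-s)) ^ m) :=
    (hprod.multipliable.mul (hmq.mul hm1)).congr fun p => (hCeq p).symm
  -- assemble
  simp only [hpowm]
  rw [show LSeries (lamq q) s
      = ∑' n, LSeries.term (lamq q) s n from rfl, ← hprod.tprod_eq,
    ← hz2.tprod_eq, ← hz1.tprod_eq,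
    ← Multipliable.tprod_mul hz2.multipliable hz1.multipliable,
    ← Multipliable.tprod_mul (hz2.multipliable.mul hz1.multipliable) hC]
  refine tprod_congr fun p => ?_
  have h1 : (1 : ℂ) - ((p : ℕ) : ℂ) ^ (-s) ≠ 0 :=
    Complex.one_sub_prime_cpow_ne_zero p.prop hs
  have h2 : (1 : ℂ) - (((p : ℕ) : ℂ) ^ (-s)) ^ q ≠ 0 := by
    rw [← hpowq p]
    exact Complex.one_sub_prime_cpow_ne_zero p.prop hsq
  rw [hCeq p]
  field_simp
end

section
/- Let q be a prime with q = 3 or q ≡ 5 or 19 (mod 24) (i.e. q ≡ ±5 (mod 24)). For every complex number s with Re(s) > 1, L(s, λ_q) = (ζ(qs) ζ(2s) / ζ(s)) · ∏_p ( 1 + ∑_{m=2}^{q-1} { ((m+1)/q) + (m/q) } · p^{-ms} ), where the product runs over all prime numbers p. -/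
open Filter

namespace LamqAux

lemma one_sub_ne_zero {Y : ℂ} (h : ‖Y‖ < 1) : 1 - Y ≠ 0 := by
  intro he
  have hY : Y = 1 := by linear_combination -he
  rw [hY] at h
  simp at h

noncomputable def ell (q : ℕ) [Fact q.Prime] (k : ℕ) : ℂ := (legendreSym q (k : ℤ) : ℂ)

variable (q : ℕ) [Fact q.Prime]

lemma norm_leg_le (a : ℤ) : ‖((legendreSym q a : ℤ) : ℂ)‖ ≤ 1 := by
  by_cases h : (a : ZMod q) = 0
  · rw [(legendreSym.eq_zero_iff q a).mpr h]; simp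
  · rcases legendreSym.eq_one_or_neg_one q h with h' | h' <;> rw [h'] <;> simp

lemma ell_one : ell q 1 = 1 := by
  simp only [ell, Nat.cast_one, legendreSym.at_one, Int.cast_one]

lemma ell_self : ell q q = 0 := by
  simp only [ell]
  rw [(legendreSym.eq_zero_iff q _).mpr (by simp)]
  simp

lemma ell_periodic (k : ℕ) : ell q (k + q) = ell q k := by
  simp only [ell]
  rw [legendreSym.mod q ((k + q : ℕ) : ℤ), legendreSym.mod q (k : ℤ)]
  congr 2
  push_cast
  simpa using Int.add_mul_emod_self_left (a := (k:ℤ)) (b := (q:ℤ)) (c := 1)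

lemma ell_two (hq : q = 3 ∨ q % 24 = 5 ∨ q % 24 = 19) : ell q 2 = -1 := by
  have hq2 : q ≠ 2 := by rcases hq with h | h | h <;> omega
  have h2 : ((2 : ℕ) : ℤ) = 2 := by norm_num
  simp only [ell, h2]
  rw [legendreSym.at_two hq2, ZMod.χ₈_nat_eq_if_mod_eight]
  have h8 : q % 8 = 3 ∨ q % 8 = 5 := by
    rcases hq with h | h | h
    · left; omega
    · right; omega
    · left; omega
  have hodd : ¬ q % 2 = 0 := by omega
  rw [if_neg hodd, if_neg (by omega)]
  norm_num

lemma hasSum_local {X : ℂ} (hX : ‖X‖ < 1) :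
    HasSum (fun e : ℕ => ell q (e+1) * X ^ e)
      ((∑ e ∈ Finset.range q, ell q (e+1) * X ^ e) * (1 - X ^ q)⁻¹) := by
  have hb : ∀ e : ℕ, ‖ell q (e+1) * X ^ e‖ ≤ ‖X‖ ^ e := by
    intro e
    rw [norm_mul, norm_pow]
    exact mul_le_of_le_one_left (by positivity) (norm_leg_le q _)
  have hsum : Summable (fun e : ℕ => ell q (e+1) * X ^ e) :=
    Summable.of_norm_bounded (summable_geometric_of_lt_one (norm_nonneg X) hX) hb
  have hq0 : q ≠ 0 := (Fact.out : q.Prime).ne_zero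
  have hXq : ‖X ^ q‖ < 1 := by
    rw [norm_pow]; exact pow_lt_one₀ (norm_nonneg X) hX hq0
  have key : (∑' e : ℕ, ell q (e+1) * X ^ e)
      = (∑ e ∈ Finset.range q, ell q (e+1) * X ^ e)
        + (∑' e : ℕ, ell q (e+1) * X ^ e) * X ^ q := by
    nth_rewrite 1 [← hsum.sum_add_tsum_nat_add q]
    congr 1
    rw [← tsum_mul_right]
    congr 1
    funext e
    have hp : ell q (e + 1 + q) = ell q (e+1) := ell_periodic q (e+1)
    have harg : e + q + 1 = e + 1 + q := by omega
    rw [harg, hp, pow_add]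
    ring
  have hT : (∑' e : ℕ, ell q (e+1) * X ^ e)
      = (∑ e ∈ Finset.range q, ell q (e+1) * X ^ e) * (1 - X ^ q)⁻¹ := by
    rw [eq_mul_inv_iff_mul_eq₀ (one_sub_ne_zero hXq)]
    linear_combination key
  have := hsum.hasSum
  rwa [hT] at this

lemma poly_id (hq : q = 3 ∨ q % 24 = 5 ∨ q % 24 = 19) {X : ℂ} :
    (∑ e ∈ Finset.range q, ell q (e+1) * X ^ e) * (1 + X)
      = 1 + ∑ m ∈ Finset.Icc 2 (q-1), (ell q (m+1) + ell q m) * X ^ m := by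
  have h2 : ell q 2 = -1 := ell_two q hq
  have hq3 : 3 ≤ q := by
    have := Nat.mod_le q 24
    rcases hq with h|h|h <;> omega
  have hrange : Finset.range q = insert 0 (Finset.Icc 1 (q-1)) := by
    ext a; simp [Finset.mem_Icc, Finset.mem_range]; omega
  have hIcc1q : Finset.Icc 1 q = insert q (Finset.Icc 1 (q-1)) := by
    ext a; simp [Finset.mem_Icc]; omega
  have hIcc1 : Finset.Icc 1 (q-1) = insert 1 (Finset.Icc 2 (q-1)) := by
    ext a; simp [Finset.mem_Icc]; omega
  have hshift : ∑ e ∈ Finset.range q, ell q (e+1) * X ^ (e+1)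
      = ∑ m ∈ Finset.Icc 1 q, ell q m * X ^ m := by
    rw [show Finset.Icc 1 q = Finset.Ico 1 (q+1) from (Finset.Ico_add_one_right_eq_Icc 1 q).symm,
      Finset.sum_Ico_eq_sum_range]
    simp only [Nat.add_sub_cancel]
    exact Finset.sum_congr rfl fun e _ => by rw [add_comm 1 e]
  have hPX : (∑ e ∈ Finset.range q, ell q (e+1) * X ^ e) * X
      = ∑ m ∈ Finset.Icc 1 (q-1), ell q m * X ^ m := by
    rw [Finset.sum_mul]
    rw [show ∑ e ∈ Finset.range q, ell q (e+1) * X ^ e * X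
        = ∑ e ∈ Finset.range q, ell q (e+1) * X ^ (e+1) from
      Finset.sum_congr rfl fun e _ => by ring]
    rw [hshift, hIcc1q, Finset.sum_insert (by simp [Finset.mem_Icc]; omega), ell_self]
    simp
  have hP : (∑ e ∈ Finset.range q, ell q (e+1) * X ^ e)
      = 1 + ∑ m ∈ Finset.Icc 1 (q-1), ell q (m+1) * X ^ m := by
    rw [hrange, Finset.sum_insert (by simp)]
    rw [ell_one]
    simp
  rw [mul_add, mul_one, hPX, hP]
  rw [hIcc1, Finset.sum_insert (by simp), Finset.sum_insert (by simp)]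
  rw [show (1:ℕ)+1 = 2 from rfl, h2, ell_one]
  rw [show ∑ m ∈ Finset.Icc 2 (q-1), (ell q (m+1) + ell q m) * X ^ m
      = ∑ m ∈ Finset.Icc 2 (q-1), ell q (m+1) * X ^ m
        + ∑ m ∈ Finset.Icc 2 (q-1), ell q m * X ^ m from by
    rw [← Finset.sum_add_distrib]
    exact Finset.sum_congr rfl fun m _ => by ring]
  ring

lemma lamq_prime_pow {p : ℕ} (hp : p.Prime) (e : ℕ) :
    lamq q (p ^ e) = ell q (e + 1) := by
  rw [lamq, Nat.divisors_prime_pow hp, Finset.card_map, Finset.card_range, ell]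

lemma norm_lamq_le (n : ℕ) : ‖lamq q n‖ ≤ 1 := norm_leg_le q _

lemma lamq_one : lamq q 1 = 1 := by
  rw [lamq, Nat.divisors_one]
  simp [legendreSym.at_one]

lemma lamq_mul {m n : ℕ} (hm : m ≠ 0) (hn : n ≠ 0) (hmn : Nat.Coprime m n) :
    lamq q (m * n) = lamq q m * lamq q n := by
  simp only [lamq]
  rw [hmn.card_divisors_mul]
  push_cast [legendreSym.mul]
  ring

end LamqAux

open scoped Topology in
open LamqAux in
theorem dirichlet_series_lamq_pm5_mod24 (q : ℕ) [Fact q.Prime]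
    (hq : q = 3 ∨ q % 24 = 5 ∨ q % 24 = 19) (s : ℂ) (hs : 1 < s.re) :
    LSeries (lamq q) s =
      riemannZeta (q * s) * riemannZeta (2 * s) / riemannZeta s *
        ∏' p : Nat.Primes,
          (1 + ∑ m ∈ Finset.Icc 2 (q - 1),
            ((legendreSym q ((m : ℤ) + 1) + legendreSym q (m : ℤ) : ℤ) : ℂ) *
              ((p : ℕ) : ℂ) ^ (-((m : ℂ) * s))) := by
  have hqp : q.Prime := Fact.out
  -- the function Q appearing in the statement
  set Q : Nat.Primes → ℂ := fun p =>
    1 + ∑ m ∈ Finset.Icc 2 (q - 1),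
      ((legendreSym q ((m : ℤ) + 1) + legendreSym q (m : ℤ) : ℤ) : ℂ) *
        ((p : ℕ) : ℂ) ^ (-((m : ℂ) * s)) with hQdef
  -- basic facts
  have hf₁ : LSeries.term (lamq q) s 1 = 1 := by
    rw [LSeries.term_of_ne_zero one_ne_zero, lamq_one]
    simp
  have hmul : ∀ {m n : ℕ}, Nat.Coprime m n →
      LSeries.term (lamq q) s (m * n)
        = LSeries.term (lamq q) s m * LSeries.term (lamq q) s n := by
    intro m n hmn
    rcases eq_or_ne m 0 with rfl | hm
    · have : n = 1 := Nat.coprime_zero_left n |>.mp hmn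
      subst this
      simp [LSeries.term_zero, hf₁]
    rcases eq_or_ne n 0 with rfl | hn
    · have : m = 1 := Nat.coprime_zero_right m |>.mp hmn
      subst this
      simp [LSeries.term_zero, hf₁]
    rw [LSeries.term_of_ne_zero (mul_ne_zero hm hn), LSeries.term_of_ne_zero hm,
      LSeries.term_of_ne_zero hn, div_mul_div_comm]
    congr 1
    · exact lamq_mul q hm hn hmn
    · push_cast
      exact Complex.natCast_mul_natCast_cpow m n s
  have hnorm : Summable (fun n => ‖LSeries.term (lamq q) s n‖) := by
    refine Summable.of_nonneg_of_le (fun _ => norm_nonneg _) (fun n => ?_)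
      (Real.summable_one_div_nat_rpow.mpr hs)
    rw [LSeries.norm_term_eq]
    split
    · positivity
    · rename_i hn
      have hn' : 0 < (n:ℝ) ^ s.re :=
        Real.rpow_pos_of_pos (by exact_mod_cast Nat.pos_of_ne_zero hn) _
      rw [div_le_div_iff₀ hn' hn', one_mul]
      exact mul_le_of_le_one_left hn'.le (norm_lamq_le q n)
  -- Euler product for L(s, λ_q)
  have hL : HasProd (fun p : Nat.Primes => ∑' e : ℕ, LSeries.term (lamq q) s ((p : ℕ) ^ e))
      (LSeries (lamq q) s) :=
    EulerProduct.eulerProduct_hasProd hf₁ hmul hnorm (LSeries.term_zero _ _)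
  -- local factor computation
  have hXlt : ∀ p : Nat.Primes, ‖((p : ℕ) : ℂ) ^ (-s)‖ < 1 := by
    intro p
    rw [Complex.norm_natCast_cpow_of_pos p.prop.pos, Complex.neg_re]
    exact Real.rpow_lt_one_of_one_lt_of_neg (by exact_mod_cast p.prop.one_lt)
      (by linarith)
  have hterm : ∀ (p : Nat.Primes) (e : ℕ),
      LSeries.term (lamq q) s ((p : ℕ) ^ e)
        = ell q (e + 1) * (((p : ℕ) : ℂ) ^ (-s)) ^ e := by
    intro p e
    rw [LSeries.term_of_ne_zero (pow_ne_zero e p.prop.ne_zero), lamq_prime_pow q p.prop]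
    have hcast : (((p : ℕ) ^ e : ℕ) : ℂ) ^ s = (((p : ℕ) : ℂ) ^ s) ^ e := by
      push_cast
      rw [← Complex.natCast_cpow_natCast_mul (p : ℕ) e s, Complex.cpow_nat_mul]
    rw [hcast, Complex.cpow_neg, inv_pow, div_eq_mul_inv]
  have hFp : ∀ p : Nat.Primes,
      (∑' e : ℕ, LSeries.term (lamq q) s ((p : ℕ) ^ e))
        = (∑ e ∈ Finset.range q, ell q (e+1) * (((p : ℕ) : ℂ) ^ (-s)) ^ e)
            * (1 - (((p : ℕ) : ℂ) ^ (-s)) ^ q)⁻¹ := by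
    intro p
    rw [tsum_congr (hterm p)]
    exact (hasSum_local q (hXlt p)).tsum_eq
  -- zeta Euler products
  have hre2 : 1 < (2 * s).re := by
    have : (2 * s).re = 2 * s.re := by simp [Complex.mul_re]
    rw [this]; linarith
  have hreq : 1 < ((q : ℂ) * s).re := by
    have h : ((q : ℂ) * s).re = (q : ℝ) * s.re := by simp [Complex.mul_re]
    have hq1 : (2 : ℝ) ≤ (q : ℝ) := by exact_mod_cast hqp.two_le
    rw [h]; nlinarith
  have hZq := riemannZeta_eulerProduct_hasProd hreq
  have hZ2 := riemannZeta_eulerProduct_hasProd hre2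
  have hZs := riemannZeta_eulerProduct_hasProd hs
  -- rewrite exponents
  have hpowq : ∀ p : Nat.Primes,
      ((p : ℕ) : ℂ) ^ (-((q : ℂ) * s)) = (((p : ℕ) : ℂ) ^ (-s)) ^ q := by
    intro p
    rw [show -((q : ℂ) * s) = (q : ℂ) * (-s) by ring, Complex.cpow_nat_mul]
  have hpow2 : ∀ p : Nat.Primes,
      ((p : ℕ) : ℂ) ^ (-(2 * s)) = (((p : ℕ) : ℂ) ^ (-s)) ^ (2 : ℕ) := by
    intro p
    rw [show -((2 : ℂ) * s) = ((2 : ℕ) : ℂ) * (-s) by push_cast; ring,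
      Complex.cpow_nat_mul]
  have hQeq : ∀ p : Nat.Primes,
      Q p = 1 + ∑ m ∈ Finset.Icc 2 (q-1),
        (ell q (m+1) + ell q m) * (((p : ℕ) : ℂ) ^ (-s)) ^ m := by
    intro p
    simp only [hQdef]
    congr 1
    refine Finset.sum_congr rfl fun m _ => ?_
    rw [show -((m : ℂ) * s) = ((m : ℕ) : ℂ) * (-s) by push_cast; ring,
      Complex.cpow_nat_mul]
    congr 1
    simp only [ell]
    push_cast
    ring
  -- the pointwise identity
  have key : ∀ p : Nat.Primes,
      (∑' e : ℕ, LSeries.term (lamq q) s ((p : ℕ) ^ e)) * (1 - ((p : ℕ) : ℂ) ^ (-s))⁻¹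
        = ((1 - ((p : ℕ) : ℂ) ^ (-((q : ℂ) * s)))⁻¹ * (1 - ((p : ℕ) : ℂ) ^ (-(2 * s)))⁻¹)
            * Q p := by
    intro p
    set X : ℂ := ((p : ℕ) : ℂ) ^ (-s) with hXdef
    have hX : ‖X‖ < 1 := hXlt p
    have h1 : 1 - X ≠ 0 := one_sub_ne_zero hX
    have h2 : 1 - X ^ (2:ℕ) ≠ 0 := one_sub_ne_zero (by
      rw [norm_pow]; exact pow_lt_one₀ (norm_nonneg X) hX two_ne_zero)
    have hqn : 1 - X ^ q ≠ 0 := one_sub_ne_zero (by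
      rw [norm_pow]; exact pow_lt_one₀ (norm_nonneg X) hX hqp.ne_zero)
    rw [hFp p, hQeq p, hpowq p, hpow2 p, ← poly_id q hq]
    simp only [← hXdef]
    have h3 : 1 + X ≠ 0 := fun h => h2 (by linear_combination (1 - X) * h)
    rw [show (1:ℂ) - X ^ (2:ℕ) = (1 - X) * (1 + X) by ring, mul_inv]
    linear_combination (-((1 - X ^ q)⁻¹ * (1 - X)⁻¹ *
      ∑ e ∈ Finset.range q, ell q (e+1) * X ^ e)) * inv_mul_cancel₀ h3
  -- combine the HasProds
  have hLζ := hL.mul hZs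
  have hGQ : HasProd (fun p : Nat.Primes =>
      ((1 - ((p : ℕ) : ℂ) ^ (-((q : ℂ) * s)))⁻¹ * (1 - ((p : ℕ) : ℂ) ^ (-(2 * s)))⁻¹) * Q p)
      (LSeries (lamq q) s * riemannZeta s) := by
    have hfun : (fun p : Nat.Primes =>
        (∑' e : ℕ, LSeries.term (lamq q) s ((p : ℕ) ^ e))
          * (1 - ((p : ℕ) : ℂ) ^ (-s))⁻¹)
        = fun p : Nat.Primes =>
          ((1 - ((p : ℕ) : ℂ) ^ (-((q : ℂ) * s)))⁻¹ * (1 - ((p : ℕ) : ℂ) ^ (-(2 * s)))⁻¹)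
            * Q p := funext key
    rw [← hfun]
    exact hLζ
  have hG := hZq.mul hZ2
  have hζq_ne : riemannZeta ((q : ℂ) * s) ≠ 0 := riemannZeta_ne_zero_of_one_lt_re hreq
  have hζ2_ne : riemannZeta (2 * s) ≠ 0 := riemannZeta_ne_zero_of_one_lt_re hre2
  have hζs_ne : riemannZeta s ≠ 0 := riemannZeta_ne_zero_of_one_lt_re hs
  have hGne : ∀ p : Nat.Primes,
      (1 - ((p : ℕ) : ℂ) ^ (-((q : ℂ) * s)))⁻¹ * (1 - ((p : ℕ) : ℂ) ^ (-(2 * s)))⁻¹ ≠ 0 := by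
    intro p
    have hX : ‖((p : ℕ) : ℂ) ^ (-s)‖ < 1 := hXlt p
    refine mul_ne_zero (inv_ne_zero ?_) (inv_ne_zero ?_)
    · rw [hpowq p]
      exact one_sub_ne_zero (by
        rw [norm_pow]; exact pow_lt_one₀ (norm_nonneg _) hX hqp.ne_zero)
    · rw [hpow2 p]
      exact one_sub_ne_zero (by
        rw [norm_pow]; exact pow_lt_one₀ (norm_nonneg _) hX two_ne_zero)
  have hprod_ne : riemannZeta ((q : ℂ) * s) * riemannZeta (2 * s) ≠ 0 :=
    mul_ne_zero hζq_ne hζ2_ne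
  have hQprod : HasProd Q
      ((LSeries (lamq q) s * riemannZeta s)
        / (riemannZeta ((q : ℂ) * s) * riemannZeta (2 * s))) := by
    have hdiv : Tendsto (fun A : Finset Nat.Primes =>
        (∏ p ∈ A, (((1 - ((p : ℕ) : ℂ) ^ (-((q : ℂ) * s)))⁻¹
            * (1 - ((p : ℕ) : ℂ) ^ (-(2 * s)))⁻¹) * Q p))
          / ∏ p ∈ A, ((1 - ((p : ℕ) : ℂ) ^ (-((q : ℂ) * s)))⁻¹
            * (1 - ((p : ℕ) : ℂ) ^ (-(2 * s)))⁻¹)) atTop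
        (𝓝 ((LSeries (lamq q) s * riemannZeta s)
          / (riemannZeta ((q : ℂ) * s) * riemannZeta (2 * s)))) :=
      Filter.Tendsto.div hGQ hG hprod_ne
    refine hdiv.congr fun A => ?_
    rw [Finset.prod_mul_distrib, mul_comm, mul_div_assoc, div_self
      (Finset.prod_ne_zero_iff.mpr fun p _ => hGne p), mul_one]
  rw [hQprod.tprod_eq]
  field_simp
  rw [mul_div_cancel_right₀ _ (by rw [mul_comm]; exact hζ2_ne)]
end
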